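/- For every word u over a nonempty finite alphabet A and every letter a ∈ A, r(u,a) ≤ ρ(u). -/

import Mathlib

/-- Simon's congruence of order `k`: `u` and `v` have the same subwords
(subsequences) of length at most `k`. -/
def SimonCong {A : Type*} (k : ℕ) (u v : List A) : Prop :=
  ∀ s : List A, s.length ≤ k → (s.Sublist u ↔ s.Sublist v)

/-- The subword distance `δ(u,v) = sup {k | u ∼ₖ v} ∈ ℕ ∪ {∞}`. -/
noncomputable def delta {A : Type*} (u v : List A) : ℕ∞ :=
  ⨆ k ∈ {k : ℕ | SimonCong k u v}, (k : ℕ∞)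

/-- Right side distance `r(u,t) = δ(u, u·t)`. -/
noncomputable def sideR {A : Type*} (u t : List A) : ℕ∞ :=
  delta u (u ++ t)

/-- Left side distance `ℓ(t,u) = δ(t·u, u)`. -/
noncomputable def sideL {A : Type*} (t u : List A) : ℕ∞ :=
  delta (t ++ u) u

/-- The piecewise complexity `h(u)`: the least `n` such that every word
`v` with `u ∼ₙ v` equals `u`. -/
noncomputable def pieceH {A : Type*} (u : List A) : ℕ :=
  sInf {n : ℕ | ∀ v : List A, SimonCong n u v → v = u}

/-- A word `u` is `m`-reduced if no strict subword of `u` is `∼ₘ`-equivalent to `u`. -/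
def MReduced {A : Type*} (m : ℕ) (u : List A) : Prop :=
  ∀ u' : List A, u'.Sublist u → u' ≠ u → ¬ SimonCong m u' u

/-- The piecewise minimality index `ρ(u)`: the least `m` such that `u` is `m`-reduced. -/
noncomputable def rho {A : Type*} (u : List A) : ℕ :=
  sInf {m : ℕ | MReduced m u}

lemma lastSplit {A : Type*} {a : A} : ∀ {u : List A}, a ∈ u →
    ∃ x y, u = x ++ a :: y ∧ a ∉ y := by
  intro u
  induction u with
  | nil => simp
  | cons b t ih =>
    intro h
    by_cases ht : a ∈ t
    · obtain ⟨x, y, rfl, hy⟩ := ih ht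
      exact ⟨b :: x, y, rfl, hy⟩
    · rcases List.mem_cons.mp h with rfl | h'
      · exact ⟨[], t, rfl, ht⟩
      · exact absurd h' ht

lemma consSub {A : Type*} {a : A} : ∀ {y v l : List A}, a ∉ y →
    (a :: l).Sublist (y ++ v) → (a :: l).Sublist v := by
  intro y
  induction y with
  | nil => intro v l _ h; simpa using h
  | cons b t ih =>
    intro v l hb hs
    cases hs with
    | cons _ h' => exact ih (fun h => hb (List.mem_cons_of_mem _ h)) h'
    | cons_cons _ h' => exact absurd List.mem_cons_self hb

lemma key {A : Type*} {u : List A} {a : A} {k m : ℕ}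
    (hcong : SimonCong k u (u ++ [a])) (hm : MReduced m u) : k ≤ m := by
  by_contra hkm
  push_neg at hkm
  have hk1 : 1 ≤ k := le_trans (Nat.succ_le_succ (Nat.zero_le m)) hkm
  have ha : a ∈ u := by
    have : [a].Sublist u := (hcong [a] (by simpa)).mpr (by simp)
    simpa using this
  obtain ⟨x, y, rfl, hy⟩ := lastSplit ha
  apply hm (x ++ y) ((List.sublist_cons_self a y).append_left x)
  · intro h
    have := congrArg List.length h
    simp at this
  · intro s hs
    constructor
    · intro h
      exact h.trans ((List.sublist_cons_self a y).append_left x)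
    · intro h
      have h2 : (s ++ [a]).Sublist ((x ++ a :: y) ++ [a]) := h.append (List.Sublist.refl _)
      have h3 : (s ++ [a]).Sublist (x ++ a :: y) := by
        apply (hcong (s ++ [a]) ?_).mpr h2
        simp only [List.length_append, List.length_singleton]
        omega
      have h4 : (a :: s.reverse).Sublist (y.reverse ++ (a :: x.reverse)) := by
        have := h3.reverse
        simpa using this
      have h5 := consSub (by simpa using hy) h4
      have h6 : s.reverse.Sublist x.reverse := List.cons_sublist_cons.mp h5
      have h7 : s.Sublist x := by simpa using h6.reverse
      exact h7.trans (List.sublist_append_left x y)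

theorem stmt13 {A : Type*} [Fintype A] [Nonempty A] (u : List A) (a : A) :
    sideR u [a] ≤ (rho u : ℕ∞) := by
  unfold sideR delta rho
  apply iSup₂_le
  intro k hk
  have hne : {m : ℕ | MReduced m u}.Nonempty := by
    refine ⟨u.length, fun u' hsub hne hcong => hne ?_⟩
    have : u.Sublist u' := (hcong u le_rfl).mpr (List.Sublist.refl u)
    exact (this.eq_of_length_le (hsub.length_le)).symm ▸ rfl
  have : k ≤ sInf {m : ℕ | MReduced m u} :=
    le_csInf hne (fun m hm => key hk hm)
  exact_mod_cast this
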